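/- Suppose X_n are uniformly bounded random variables, for every bounded Lipschitz f we have ∑_{n=1}^∞ |E[f(X_n)] − E[f(X)]| < ∞, and ∑_{n=1}^∞ E[|Y_n − C|] < ∞ for a constant C. Then for every bounded Lipschitz f, ∑_{n=1}^∞ |E[f(X_n Y_n)] − E[f(C X)]| < ∞. -/

import Mathlib

open MeasureTheory

/-- If the `Xₙ` are uniformly bounded, `Xₙ → X` in the `S₁-d` sense, and
`∑ₙ E[|Yₙ − C|] < ∞`, then `XₙYₙ → CX` in the `S₁-d` sense. -/
theorem stmt13 {Ω : Type*} [MeasurableSpace Ω] (P : Measure Ω) [IsProbabilityMeasure P]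
    (X : ℕ → Ω → ℝ) (Y : ℕ → Ω → ℝ) (X0 : Ω → ℝ) (C : ℝ)
    (hmeasX : ∀ n, Measurable (X n)) (hmeasY : ∀ n, Measurable (Y n))
    (hmeas0 : Measurable X0)
    (M : ℝ) (hbdd : ∀ n, ∀ᵐ ω ∂P, |X n ω| ≤ M)
    (hX : ∀ f : ℝ → ℝ, (∃ K : NNReal, LipschitzWith K f) → (∃ B : ℝ, ∀ x, |f x| ≤ B) →
      Summable (fun n : ℕ => |(∫ ω, f (X n ω) ∂P) - ∫ ω, f (X0 ω) ∂P|))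
    (hYint : ∀ n, Integrable (fun ω => |Y n ω - C|) P)
    (hY : Summable (fun n : ℕ => ∫ ω, |Y n ω - C| ∂P)) :
    ∀ f : ℝ → ℝ, (∃ K : NNReal, LipschitzWith K f) → (∃ B : ℝ, ∀ x, |f x| ≤ B) →
      Summable (fun n : ℕ =>
        |(∫ ω, f (X n ω * Y n ω) ∂P) - ∫ ω, f (C * X0 ω) ∂P|) := by
  rintro f ⟨K, hK⟩ ⟨B, hB⟩
  have hfcont : Continuous f := hK.continuous
  -- g(x) = f (C * x) is Lipschitz and bounded
  have hmulC : LipschitzWith ‖C‖₊ (fun x : ℝ => C * x) :=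
    LipschitzWith.of_dist_le_mul fun x y => by
      simp [Real.dist_eq, ← mul_sub, abs_mul]
  have hg : Summable (fun n : ℕ =>
      |(∫ ω, f (C * X n ω) ∂P) - ∫ ω, f (C * X0 ω) ∂P|) :=
    hX (fun x => f (C * x)) ⟨K * ‖C‖₊, hK.comp hmulC⟩ ⟨B, fun x => hB _⟩
  -- integrability helpers
  have hint : ∀ (g : Ω → ℝ), Measurable g → Integrable (fun ω => f (g ω)) P := by
    intro g hg
    exact (integrable_const B).mono' (hfcont.measurable.comp hg).aestronglyMeasurable
      (Filter.Eventually.of_forall fun ω => by simpa using hB (g ω))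
  -- termwise bound
  have hterm : ∀ n, |(∫ ω, f (X n ω * Y n ω) ∂P) - ∫ ω, f (C * X0 ω) ∂P|
      ≤ (K : ℝ) * M * (∫ ω, |Y n ω - C| ∂P)
        + |(∫ ω, f (C * X n ω) ∂P) - ∫ ω, f (C * X0 ω) ∂P| := by
    intro n
    have h1 : |(∫ ω, f (X n ω * Y n ω) ∂P) - ∫ ω, f (C * X n ω) ∂P|
        ≤ (K : ℝ) * M * (∫ ω, |Y n ω - C| ∂P) := by
      have hi1 := hint (fun ω => X n ω * Y n ω) ((hmeasX n).mul (hmeasY n))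
      have hi2 := hint (fun ω => C * X n ω) (measurable_const.mul (hmeasX n))
      rw [← integral_sub hi1 hi2]
      calc |∫ ω, (f (X n ω * Y n ω) - f (C * X n ω)) ∂P|
          ≤ ∫ ω, |f (X n ω * Y n ω) - f (C * X n ω)| ∂P :=
            by simpa [Real.norm_eq_abs] using norm_integral_le_integral_norm (fun ω => f (X n ω * Y n ω) - f (C * X n ω))
        _ ≤ ∫ ω, (K : ℝ) * M * |Y n ω - C| ∂P := by
            apply integral_mono_ae ((hi1.sub hi2).abs) ((hYint n).const_mul _)
            filter_upwards [hbdd n] with ω hω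
            have h2 : |f (X n ω * Y n ω) - f (C * X n ω)|
                ≤ (K : ℝ) * |X n ω * Y n ω - C * X n ω| := by
              have := hK.dist_le_mul (X n ω * Y n ω) (C * X n ω)
              simpa [Real.dist_eq] using this
            have h3 : |X n ω * Y n ω - C * X n ω| = |X n ω| * |Y n ω - C| := by
              rw [← abs_mul]; ring_nf
            calc |f (X n ω * Y n ω) - f (C * X n ω)|
                ≤ (K : ℝ) * (|X n ω| * |Y n ω - C|) := by rw [← h3]; exact h2
              _ ≤ (K : ℝ) * (M * |Y n ω - C|) := by
                  apply mul_le_mul_of_nonneg_left _ K.coe_nonneg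
                  exact mul_le_mul_of_nonneg_right hω (abs_nonneg _)
              _ = (K : ℝ) * M * |Y n ω - C| := by ring
        _ = (K : ℝ) * M * (∫ ω, |Y n ω - C| ∂P) := integral_const_mul _ _
    calc |(∫ ω, f (X n ω * Y n ω) ∂P) - ∫ ω, f (C * X0 ω) ∂P|
        ≤ |(∫ ω, f (X n ω * Y n ω) ∂P) - ∫ ω, f (C * X n ω) ∂P|
          + |(∫ ω, f (C * X n ω) ∂P) - ∫ ω, f (C * X0 ω) ∂P| := abs_sub_le _ _ _
      _ ≤ _ := add_le_add h1 le_rfl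
  exact Summable.of_nonneg_of_le (fun n => abs_nonneg _) hterm ((hY.mul_left _).add hg)
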